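/- Let 1 ≤ p < p₀ < ∞, λ, μ > 0, and β, δ ∈ ℝ with β + (n−λ)/p = δ + (n−μ)/p₀. Then ‖f‖_{LM^p(φ_λ, w_β^p)} ≲ ‖f‖_{LM^{p₀}(φ_μ, w_δ^{p₀})} for all measurable f, where φ_λ(B) = r_B^λ and w_β(x) = |x|^β. -/

import Mathlib

open MeasureTheory Metric Set ENNReal

noncomputable section

abbrev Euc (n : ℕ) := EuclideanSpace ℝ (Fin n)

/-- Extended-real weighted local Morrey norm (sup over balls centered at the origin). -/
def lmNormE (n : ℕ) (p : ℝ) (φ : ℝ → ℝ≥0∞) (w : Euc n → ℝ≥0∞) (g : Euc n → ℝ≥0∞) : ℝ≥0∞ :=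
  ⨆ (R : ℝ) (_ : 0 < R),
    ((φ R)⁻¹ * ∫⁻ x in ball (0 : Euc n) R, g x ^ p * w x) ^ (1 / p)

def lmNorm (n : ℕ) (p : ℝ) (φ : ℝ → ℝ≥0∞) (w : Euc n → ℝ≥0∞) (f : Euc n → ℝ) : ℝ≥0∞ :=
  lmNormE n p φ w (fun x => ENNReal.ofReal |f x|)

/-- Weak weighted local Morrey norm (for nonnegative extended-real valued functions). -/
def wlmNormE (n : ℕ) (q : ℝ) (ψ : ℝ → ℝ≥0∞) (v : Euc n → ℝ≥0∞) (g : Euc n → ℝ≥0∞) : ℝ≥0∞ :=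
  ⨆ (R : ℝ) (_ : 0 < R) (t : ℝ≥0∞) (_ : 0 < t),
    t * ((ψ R)⁻¹ * ∫⁻ x in {x : Euc n | x ∈ ball (0 : Euc n) R ∧ t < g x}, v x) ^ (1 / q)

def Doubling (φ : ℝ → ℝ≥0∞) : Prop := ∃ C : ℝ≥0∞, C < ⊤ ∧ ∀ R > (0 : ℝ), φ (2 * R) ≤ C * φ R

def RevDoubling (φ : ℝ → ℝ≥0∞) : Prop :=
  ∃ C : ℝ≥0∞, C < ⊤ ∧ ∀ R > (0 : ℝ), ∀ b ∈ Set.Ioo (0 : ℝ) 1,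
    ∑' j : ℕ, φ (b ^ j * R) ≤ C * φ R

/-- The fractional maximal operator `M_α` (the Hardy–Littlewood maximal
operator when `α = 0`). -/
def fracMax (n : ℕ) (α : ℝ) (g : Euc n → ℝ≥0∞) (x : Euc n) : ℝ≥0∞ :=
  ⨆ (c : Euc n) (r : ℝ) (_ : 0 < r ∧ x ∈ ball c r),
    (volume (ball c r)) ^ (α / (n : ℝ) - 1) * ∫⁻ y in ball c r, g y

/-- The fractional integral (Riesz potential) `I_α`. -/
def fracInt (n : ℕ) (α : ℝ) (g : Euc n → ℝ≥0∞) (x : Euc n) : ℝ≥0∞ :=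
  ∫⁻ y, g y * ENNReal.ofReal (‖x - y‖ ^ (α - (n : ℝ)))

/-- The Köthe dual norm of a weighted local Morrey space, evaluated on a
nonnegative (extended-real valued) function. -/
def kdualLM (n : ℕ) (p : ℝ) (φ : ℝ → ℝ≥0∞) (w : Euc n → ℝ≥0∞) (g : Euc n → ℝ≥0∞) : ℝ≥0∞ :=
  ⨆ (f : Euc n → ℝ) (_ : Measurable f ∧ lmNorm n p φ w f ≤ 1),
    ∫⁻ x, ENNReal.ofReal |f x| * g x

/-- The characteristic function of a ball, as an `ℝ≥0∞` valued function. -/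
def chiE (n : ℕ) (c : Euc n) (r : ℝ) : Euc n → ℝ≥0∞ := (ball c r).indicator fun _ => (1 : ℝ≥0∞)

/-- Samko-type Morrey parameter function `φ_λ(B) = r_B ^ λ`. -/
def phiS (lam : ℝ) : ℝ → ℝ≥0∞ := fun R => ENNReal.ofReal (R ^ lam)

/-- Power weight `w_β(x) = |x| ^ β` (raised to the exponent `s`). -/
def powW (n : ℕ) (β s : ℝ) : Euc n → ℝ≥0∞ := fun x => ENNReal.ofReal (‖x‖ ^ (β * s))

private lemma lemA (n : ℕ) (p0 mu δ : ℝ) (hp0 : 0 < p0) (g : Euc n → ℝ≥0∞) (r : ℝ) (hr : 0 < r) :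
    ∫⁻ x in ball (0 : Euc n) r, g x ^ p0 * powW n δ p0 x ≤
      ENNReal.ofReal (r ^ mu) * (lmNormE n p0 (phiS mu) (powW n δ p0) g) ^ p0 := by
  set N := lmNormE n p0 (phiS mu) (powW n δ p0) g with hN
  set I := ∫⁻ x in ball (0 : Euc n) r, g x ^ p0 * powW n δ p0 x with hI
  have h1 : ((phiS mu r)⁻¹ * I) ^ (1 / p0) ≤ N := by
    rw [hN, lmNormE]
    exact le_iSup₂ (f := fun (R : ℝ) (_ : 0 < R) =>
      ((phiS mu R)⁻¹ * ∫⁻ x in ball (0 : Euc n) R, g x ^ p0 * powW n δ p0 x) ^ (1 / p0)) r hr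
  have h2 : (phiS mu r)⁻¹ * I ≤ N ^ p0 := by
    have := ENNReal.rpow_le_rpow h1 hp0.le
    rwa [← ENNReal.rpow_mul, one_div, inv_mul_cancel₀ hp0.ne', ENNReal.rpow_one] at this
  have hne : phiS mu r ≠ 0 := by
    simp only [phiS, ne_eq, ENNReal.ofReal_eq_zero, not_le]
    exact Real.rpow_pos_of_pos hr mu
  calc I = phiS mu r * ((phiS mu r)⁻¹ * I) := by
            rw [← mul_assoc, ENNReal.mul_inv_cancel hne ENNReal.ofReal_ne_top, one_mul]
    _ ≤ phiS mu r * N ^ p0 := mul_le_mul_right h2 _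
    _ = ENNReal.ofReal (r ^ mu) * N ^ p0 := rfl

private lemma powW_meas (n : ℕ) (β s : ℝ) : Measurable (powW n β s) :=
  ENNReal.measurable_ofReal.comp (measurable_norm.pow measurable_const)

private lemma lemB (n : ℕ) (hn : 0 < n) (p p0 : ℝ) (hp : 1 ≤ p) (hpp0 : p < p0)
    (lam mu : ℝ) (β δ : ℝ)
    (hrel : β + ((n : ℝ) - lam) / p = δ + ((n : ℝ) - mu) / p0) :
    ∃ C₀ : ℝ≥0∞, C₀ < ⊤ ∧ ∀ g : Euc n → ℝ≥0∞, Measurable g → ∀ r : ℝ, 0 < r →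
      ∫⁻ x in closedBall (0 : Euc n) r \ ball (0 : Euc n) (r / 2), g x ^ p * powW n β p x ≤
        C₀ * ENNReal.ofReal (r ^ lam) * (lmNormE n p0 (phiS mu) (powW n δ p0) g) ^ p := by
  have hp' : 0 < p := lt_of_lt_of_le one_pos hp
  have hp0' : 0 < p0 := hp'.trans hpp0
  set e : ℝ := (β - δ) * p with he
  set m : ℝ := max 1 ((2 : ℝ) ^ (-e)) with hm
  have hm1 : 1 ≤ m := le_max_left _ _
  have hm0 : 0 ≤ m := zero_le_one.trans hm1
  set c : ℝ≥0∞ := volume (ball (0 : Euc n) 1) with hc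
  have hcfin : c ≠ ⊤ := measure_ball_lt_top.ne
  set θ : ℝ := 1 - p / p0 with hθ
  have hpq0 : 0 ≤ p / p0 := by positivity
  have hθ0 : 0 ≤ θ := by
    rw [hθ]
    have : p / p0 ≤ 1 := (div_le_one hp0').2 hpp0.le
    linarith
  have harith : e + mu * (p / p0) + (n : ℝ) * θ = lam := by
    rw [he, hθ]
    field_simp at hrel ⊢
    nlinarith [hrel]
  refine ⟨ENNReal.ofReal m * ENNReal.ofReal ((2 : ℝ) ^ (mu * (p / p0))) *
      ENNReal.ofReal ((2 : ℝ) ^ ((n : ℝ) * θ)) * c ^ θ, ?_, ?_⟩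
  · exact ENNReal.mul_lt_top
      (ENNReal.mul_lt_top (ENNReal.mul_lt_top ENNReal.ofReal_lt_top ENNReal.ofReal_lt_top)
        ENNReal.ofReal_lt_top) (ENNReal.rpow_lt_top_of_nonneg hθ0 hcfin)
  intro g hg r hr
  have h2r : (0 : ℝ) < 2 * r := by linarith
  set N := lmNormE n p0 (phiS mu) (powW n δ p0) g with hN
  set A : Set (Euc n) := closedBall (0 : Euc n) r \ ball (0 : Euc n) (r / 2) with hA
  have hAmeas : MeasurableSet A := measurableSet_closedBall.diff measurableSet_ball
  have hAr : ∀ x ∈ A, r / 2 ≤ ‖x‖ ∧ ‖x‖ ≤ r := by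
    intro x hx
    obtain ⟨h1, h2⟩ := hx
    rw [mem_closedBall, dist_zero_right] at h1
    rw [mem_ball, dist_zero_right, not_lt] at h2
    exact ⟨h2, h1⟩
  have hAsub : A ⊆ ball (0 : Euc n) (2 * r) := by
    intro x hx
    rw [mem_ball, dist_zero_right]
    exact lt_of_le_of_lt (hAr x hx).2 (by linarith)
  -- Step 1: pointwise weight bound on A
  have hw : ∀ x ∈ A, powW n β p x ≤ ENNReal.ofReal (m * r ^ e) * powW n δ p x := by
    intro x hx
    obtain ⟨hx1, hx2⟩ := hAr x hx
    have hxpos : 0 < ‖x‖ := lt_of_lt_of_le (by positivity) hx1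
    have key : ‖x‖ ^ (β * p) ≤ (m * r ^ e) * ‖x‖ ^ (δ * p) := by
      have hsplit : ‖x‖ ^ (β * p) = ‖x‖ ^ e * ‖x‖ ^ (δ * p) := by
        rw [← Real.rpow_add hxpos, he]; ring_nf
      rw [hsplit]
      refine mul_le_mul_of_nonneg_right ?_ (Real.rpow_nonneg hxpos.le _)
      rcases le_or_gt 0 e with hε | hε
      · calc ‖x‖ ^ e ≤ r ^ e := Real.rpow_le_rpow hxpos.le hx2 hε
          _ ≤ m * r ^ e := le_mul_of_one_le_left (Real.rpow_nonneg hr.le _) hm1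
      · have h1 : ‖x‖ ^ e ≤ (r / 2) ^ e :=
          Real.rpow_le_rpow_of_nonpos (by positivity) hx1 hε.le
        have h2 : (r / 2) ^ e = (2 : ℝ) ^ (-e) * r ^ e := by
          rw [Real.div_rpow hr.le (by norm_num), Real.rpow_neg (by norm_num)]
          ring
        calc ‖x‖ ^ e ≤ (2 : ℝ) ^ (-e) * r ^ e := by rw [← h2]; exact h1
          _ ≤ m * r ^ e :=
            mul_le_mul_of_nonneg_right (le_max_right _ _) (Real.rpow_nonneg hr.le _)
    calc powW n β p x = ENNReal.ofReal (‖x‖ ^ (β * p)) := rfl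
      _ ≤ ENNReal.ofReal ((m * r ^ e) * ‖x‖ ^ (δ * p)) := ENNReal.ofReal_le_ofReal key
      _ = ENNReal.ofReal (m * r ^ e) * powW n δ p x := by
          rw [ENNReal.ofReal_mul (by positivity)]; rfl
  have step1 : ∫⁻ x in A, g x ^ p * powW n β p x ≤
      ENNReal.ofReal (m * r ^ e) * ∫⁻ x in A, g x ^ p * powW n δ p x := by
    rw [← lintegral_const_mul' _ _ ENNReal.ofReal_ne_top]
    refine lintegral_mono_ae ?_
    rw [ae_restrict_iff' hAmeas]
    filter_upwards with x hx
    calc g x ^ p * powW n β p x ≤ g x ^ p * (ENNReal.ofReal (m * r ^ e) * powW n δ p x) :=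
          mul_le_mul_right (hw x hx) _
      _ = ENNReal.ofReal (m * r ^ e) * (g x ^ p * powW n δ p x) := by ring
  -- Hölder
  set s : ℝ := p0 / p with hs
  have hs1 : 1 < s := (one_lt_div hp').2 hpp0
  have hconj : s.HolderConjugate s.conjExponent := Real.HolderConjugate.conjExponent hs1
  have hinv_s : 1 / s = p / p0 := by rw [hs, one_div, inv_div]
  have hinv_t : 1 / s.conjExponent = θ := by
    have h := hconj.inv_add_inv_eq_one
    rw [← one_div, ← one_div] at h
    rw [hθ, ← hinv_s]; linarith
  have hps : p * s = p0 := by rw [hs]; field_simp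
  have hu : Measurable fun x => g x ^ p * powW n δ p x :=
    (hg.pow measurable_const).mul (powW_meas n δ p)
  have hupow : ∀ x : Euc n, (g x ^ p * powW n δ p x) ^ s = g x ^ p0 * powW n δ p0 x := by
    intro x
    rw [ENNReal.mul_rpow_of_nonneg _ _ (by positivity : (0:ℝ) ≤ s), ← ENNReal.rpow_mul, hps]
    congr 1
    show (ENNReal.ofReal (‖x‖ ^ (δ * p))) ^ s = ENNReal.ofReal (‖x‖ ^ (δ * p0))
    rw [ENNReal.ofReal_rpow_of_nonneg (Real.rpow_nonneg (norm_nonneg x) _) (by positivity),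
      ← Real.rpow_mul (norm_nonneg x), show δ * p * s = δ * p0 by rw [← hps]; ring]
  have holder2 : ∫⁻ x in A, g x ^ p * powW n δ p x ≤
      (∫⁻ x in A, g x ^ p0 * powW n δ p0 x) ^ (p / p0) * volume A ^ θ := by
    have h := ENNReal.lintegral_mul_le_Lp_mul_Lq (volume.restrict A) hconj
      hu.aemeasurable (aemeasurable_const (b := (1 : ℝ≥0∞)))
    simp only [Pi.mul_apply, mul_one, ENNReal.one_rpow, lintegral_one,
      Measure.restrict_apply_univ] at h
    calc ∫⁻ x in A, g x ^ p * powW n δ p x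
        ≤ (∫⁻ x in A, (g x ^ p * powW n δ p x) ^ s) ^ (1 / s) * volume A ^ (1 / s.conjExponent) :=
          h
      _ = (∫⁻ x in A, g x ^ p0 * powW n δ p0 x) ^ (p / p0) * volume A ^ θ := by
          rw [lintegral_congr hupow, hinv_s, hinv_t]
  -- Step 3: ball estimates
  have hint : ∫⁻ x in A, g x ^ p0 * powW n δ p0 x ≤ ENNReal.ofReal ((2 * r) ^ mu) * N ^ p0 :=
    le_trans (lintegral_mono_set hAsub) (lemA n p0 mu δ hp0' g (2 * r) h2r)
  have hvol : volume A ≤ ENNReal.ofReal ((2 * r) ^ ((n : ℝ))) * c := by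
    calc volume A ≤ volume (ball (0 : Euc n) (2 * r)) := measure_mono hAsub
      _ = ENNReal.ofReal ((2 * r) ^ n) * c := by
          rw [hc, Measure.addHaar_ball_of_pos _ _ h2r, finrank_euclideanSpace_fin]
      _ = ENNReal.ofReal ((2 * r) ^ ((n : ℝ))) * c := by rw [Real.rpow_natCast]
  -- component algebra
  have E1 : (ENNReal.ofReal ((2 * r) ^ mu) * N ^ p0) ^ (p / p0) =
      ENNReal.ofReal ((2 : ℝ) ^ (mu * (p / p0))) * ENNReal.ofReal (r ^ (mu * (p / p0))) * N ^ p := by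
    rw [ENNReal.mul_rpow_of_nonneg _ _ hpq0, ← ENNReal.rpow_mul,
      show p0 * (p / p0) = p by field_simp,
      ENNReal.ofReal_rpow_of_nonneg (Real.rpow_nonneg h2r.le _) hpq0,
      ← Real.rpow_mul h2r.le, Real.mul_rpow (by norm_num) hr.le,
      ENNReal.ofReal_mul (by positivity)]
  have E2 : (ENNReal.ofReal ((2 * r) ^ ((n : ℝ))) * c) ^ θ =
      ENNReal.ofReal ((2 : ℝ) ^ ((n : ℝ) * θ)) * ENNReal.ofReal (r ^ ((n : ℝ) * θ)) * c ^ θ := by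
    rw [ENNReal.mul_rpow_of_nonneg _ _ hθ0,
      ENNReal.ofReal_rpow_of_nonneg (Real.rpow_nonneg h2r.le _) hθ0,
      ← Real.rpow_mul h2r.le, Real.mul_rpow (by norm_num) hr.le,
      ENNReal.ofReal_mul (by positivity)]
  have E3 : ENNReal.ofReal (r ^ lam) =
      ENNReal.ofReal (r ^ e) * (ENNReal.ofReal (r ^ (mu * (p / p0))) *
        ENNReal.ofReal (r ^ ((n : ℝ) * θ))) := by
    rw [← ENNReal.ofReal_mul (by positivity), ← ENNReal.ofReal_mul (by positivity),
      ← Real.rpow_add hr, ← Real.rpow_add hr, ← add_assoc, ← harith]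
  calc ∫⁻ x in A, g x ^ p * powW n β p x
      ≤ ENNReal.ofReal (m * r ^ e) * ((ENNReal.ofReal ((2 * r) ^ mu) * N ^ p0) ^ (p / p0) *
          (ENNReal.ofReal ((2 * r) ^ ((n : ℝ))) * c) ^ θ) := by
        refine step1.trans (mul_le_mul_right (holder2.trans ?_) _)
        exact mul_le_mul' (ENNReal.rpow_le_rpow hint hpq0) (ENNReal.rpow_le_rpow hvol hθ0)
    _ = ENNReal.ofReal m * ENNReal.ofReal ((2 : ℝ) ^ (mu * (p / p0))) *
          ENNReal.ofReal ((2 : ℝ) ^ ((n : ℝ) * θ)) * c ^ θ *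
          ENNReal.ofReal (r ^ lam) * N ^ p := by
        rw [ENNReal.ofReal_mul hm0, E1, E2, E3]; ring

private lemma cover (n : ℕ) (R : ℝ) :
    ball (0 : Euc n) R ⊆ {0} ∪ ⋃ j : ℕ,
      (closedBall (0 : Euc n) (R / 2 ^ j) \ ball (0 : Euc n) (R / 2 ^ j / 2)) := by
  intro x hx
  rw [mem_ball, dist_zero_right] at hx
  rcases eq_or_ne x 0 with rfl | hx0
  · exact Or.inl rfl
  have hxpos : 0 < ‖x‖ := norm_pos_iff.2 hx0
  have ht : 1 < R / ‖x‖ := (one_lt_div hxpos).2 hx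
  have hex : ∃ k : ℕ, R / ‖x‖ < 2 ^ k := pow_unbounded_of_one_lt _ one_lt_two
  classical
  have hk : R / ‖x‖ < 2 ^ (Nat.find hex) := Nat.find_spec hex
  have hkne : Nat.find hex ≠ 0 := by
    intro h
    rw [h] at hk
    simp only [pow_zero] at hk
    linarith
  obtain ⟨j, hj⟩ := Nat.exists_eq_succ_of_ne_zero hkne
  have hmin : ¬ (R / ‖x‖ < 2 ^ j) := Nat.find_min hex (by omega)
  push_neg at hmin
  have hpj : (0:ℝ) < 2 ^ j := by positivity
  refine Or.inr (mem_iUnion.2 ⟨j, ?_, ?_⟩)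
  · rw [mem_closedBall, dist_zero_right, le_div_iff₀ hpj]
    have h1 : 2 ^ j * ‖x‖ ≤ R := (le_div_iff₀ hxpos).1 hmin
    linarith
  · rw [mem_ball, dist_zero_right, not_lt, div_div, div_le_iff₀ (by positivity)]
    rw [hj] at hk
    have h1 : R < 2 ^ (j + 1) * ‖x‖ := (div_lt_iff₀ hxpos).1 hk
    have h2 : (2:ℝ) ^ (j+1) = 2 ^ j * 2 := by ring
    nlinarith

private lemma geomsum (lam R : ℝ) (hlam : 0 < lam) (hR : 0 < R) :
    ∑' j : ℕ, ENNReal.ofReal ((R / 2 ^ j) ^ lam) =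
      ENNReal.ofReal (R ^ lam) * (1 - ENNReal.ofReal ((2:ℝ) ^ (-lam)))⁻¹ := by
  have hterm : ∀ j : ℕ, ENNReal.ofReal ((R / 2 ^ j) ^ lam) =
      ENNReal.ofReal (R ^ lam) * (ENNReal.ofReal ((2:ℝ) ^ (-lam))) ^ j := by
    intro j
    have h1 : (R / 2 ^ j) ^ lam = R ^ lam * ((2:ℝ) ^ (-lam)) ^ j := by
      rw [Real.div_rpow hR.le (by positivity), ← Real.rpow_natCast (2:ℝ) j,
        ← Real.rpow_mul (by norm_num), mul_comm (j:ℝ) lam, Real.rpow_mul (by norm_num),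
        Real.rpow_natCast, div_eq_mul_inv, ← inv_pow, ← Real.rpow_neg (by norm_num)]
    rw [h1, ENNReal.ofReal_mul (Real.rpow_nonneg hR.le _),
      ENNReal.ofReal_pow (Real.rpow_nonneg (by norm_num) _)]
  rw [tsum_congr hterm, ENNReal.tsum_mul_left, ENNReal.tsum_geometric]

theorem stmt13 (n : ℕ) (hn : 0 < n) (p p0 : ℝ) (hp : 1 ≤ p) (hpp0 : p < p0)
    (lam mu : ℝ) (hlam : 0 < lam) (hmu : 0 < mu) (β δ : ℝ)
    (hrel : β + (n - lam) / p = δ + (n - mu) / p0) :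
    ∃ C : ℝ≥0∞, C < ⊤ ∧ ∀ f : Euc n → ℝ, Measurable f →
      lmNorm n p (phiS lam) (powW n β p) f ≤ C * lmNorm n p0 (phiS mu) (powW n δ p0) f := by
  have hp' : 0 < p := lt_of_lt_of_le one_pos hp
  haveI : Nontrivial (Euc n) := by
    refine ⟨EuclideanSpace.single ⟨0, hn⟩ 1, 0, fun h => ?_⟩
    have := congrArg (fun v : Euc n => v ⟨0, hn⟩) h
    simp [EuclideanSpace.single] at this
  obtain ⟨C₀, hC₀, hB⟩ := lemB n hn p p0 hp hpp0 lam mu β δ hrel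
  set q : ℝ≥0∞ := ENNReal.ofReal ((2:ℝ) ^ (-lam)) with hq
  have hq1 : q < 1 := by
    rw [hq]
    refine lt_of_lt_of_le (ENNReal.ofReal_lt_ofReal_iff one_pos |>.2 ?_) (by simp)
    exact Real.rpow_lt_one_of_one_lt_of_neg one_lt_two (by linarith)
  have hS : (1 - q)⁻¹ < ⊤ := ENNReal.inv_lt_top.2 (tsub_pos_of_lt hq1)
  refine ⟨(C₀ * (1 - q)⁻¹) ^ (1 / p), ?_, ?_⟩
  · exact ENNReal.rpow_lt_top_of_nonneg (by positivity)
      (ENNReal.mul_lt_top hC₀ hS).ne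
  intro f hf
  set g : Euc n → ℝ≥0∞ := fun x => ENNReal.ofReal |f x| with hgdef
  have hg : Measurable g := ENNReal.measurable_ofReal.comp hf.abs
  set N := lmNormE n p0 (phiS mu) (powW n δ p0) g with hN
  show lmNormE n p (phiS lam) (powW n β p) g ≤ (C₀ * (1 - q)⁻¹) ^ (1 / p) * N
  rw [lmNormE]
  refine iSup_le fun R => iSup_le fun hR => ?_
  -- main integral estimate on the ball of radius R
  have hball : ∫⁻ x in ball (0 : Euc n) R, g x ^ p * powW n β p x ≤
      C₀ * (1 - q)⁻¹ * ENNReal.ofReal (R ^ lam) * N ^ p := by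
    have hz : volume ({0} : Set (Euc n)) = 0 := measure_singleton 0
    calc ∫⁻ x in ball (0 : Euc n) R, g x ^ p * powW n β p x
        ≤ ∫⁻ x in ({0} ∪ ⋃ j : ℕ, (closedBall (0 : Euc n) (R / 2 ^ j) \
            ball (0 : Euc n) (R / 2 ^ j / 2))), g x ^ p * powW n β p x :=
          lintegral_mono_set (cover n R)
      _ ≤ (∫⁻ x in ({0} : Set (Euc n)), g x ^ p * powW n β p x) +
          ∫⁻ x in (⋃ j : ℕ, (closedBall (0 : Euc n) (R / 2 ^ j) \
            ball (0 : Euc n) (R / 2 ^ j / 2))), g x ^ p * powW n β p x :=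
          lintegral_union_le _ _ _
      _ ≤ ∑' j : ℕ, ∫⁻ x in (closedBall (0 : Euc n) (R / 2 ^ j) \
            ball (0 : Euc n) (R / 2 ^ j / 2)), g x ^ p * powW n β p x := by
          rw [setLIntegral_measure_zero _ _ hz, zero_add]
          exact lintegral_iUnion_le _ _
      _ ≤ ∑' j : ℕ, C₀ * ENNReal.ofReal ((R / 2 ^ j) ^ lam) * N ^ p := by
          refine ENNReal.tsum_le_tsum fun j => ?_
          exact hB g hg (R / 2 ^ j) (by positivity)
      _ = C₀ * (1 - q)⁻¹ * ENNReal.ofReal (R ^ lam) * N ^ p := by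
          have : ∀ j : ℕ, C₀ * ENNReal.ofReal ((R / 2 ^ j) ^ lam) * N ^ p =
              (C₀ * N ^ p) * ENNReal.ofReal ((R / 2 ^ j) ^ lam) := fun j => by ring
          rw [tsum_congr this, ENNReal.tsum_mul_left, geomsum lam R hlam hR]
          ring
  have hphi0 : phiS lam R ≠ 0 := by
    simp only [phiS, ne_eq, ENNReal.ofReal_eq_zero, not_le]
    exact Real.rpow_pos_of_pos hR lam
  calc ((phiS lam R)⁻¹ * ∫⁻ x in ball (0 : Euc n) R, g x ^ p * powW n β p x) ^ (1 / p)
      ≤ ((phiS lam R)⁻¹ * (C₀ * (1 - q)⁻¹ * ENNReal.ofReal (R ^ lam) * N ^ p)) ^ (1 / p) :=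
        ENNReal.rpow_le_rpow (mul_le_mul_right hball _) (by positivity)
    _ = (C₀ * (1 - q)⁻¹ * N ^ p) ^ (1 / p) := by
        congr 1
        have : (phiS lam R)⁻¹ * (C₀ * (1 - q)⁻¹ * ENNReal.ofReal (R ^ lam) * N ^ p) =
            ((phiS lam R)⁻¹ * phiS lam R) * (C₀ * (1 - q)⁻¹ * N ^ p) := by
          show (phiS lam R)⁻¹ * (C₀ * (1 - q)⁻¹ * phiS lam R * N ^ p) = _
          ring
        rw [this, ENNReal.inv_mul_cancel hphi0 ENNReal.ofReal_ne_top, one_mul]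
    _ = (C₀ * (1 - q)⁻¹) ^ (1 / p) * N := by
        rw [ENNReal.mul_rpow_of_nonneg _ _ (by positivity : (0:ℝ) ≤ 1 / p),
          ← ENNReal.rpow_mul, mul_one_div, div_self hp'.ne', ENNReal.rpow_one]
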